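/- In a symmetric all-pay auction with I bidders whose valuations are i.i.d. with CDF F on [v_low, v_high], with rewards M_1 ≥ M_2 ≥ ... ≥ M_I ≥ 0 and quadratic bidding cost c(z) = θκa z², the symmetric equilibrium bid satisfies c(β(v)) = Σ_{k=1}^{I-1} (M_k − M_{k+1}) ∫_{v_low}^{v} t f_{k:I-1}(t) dt, i.e., β(v) = sqrt( (1/(θκa)) Σ_{k=1}^{I-1} (M_k − M_{k+1}) ∫_{v_low}^{v} t f_{k:I-1}(t) dt ), where f_{k:I-1} is the density of the k-th highest among I−1 i.i.d. draws from F. Verify this solves the first-order condition v Σ_{k=1}^{I} (f_{k:I-1}(v) − f_{k-1:I-1}(v)) M_k = c'(β(v)) β'(v) with boundary condition β(v_low)=0. -/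

import Mathlib

open MeasureTheory intervalIntegral

lemma abel_sum (g M : ℕ → ℝ) : ∀ n, 1 ≤ n →
    ∑ k ∈ Finset.Icc 1 n, (g k - g (k-1)) * M k
      = g n * M n - g 0 * M 1 + ∑ k ∈ Finset.Icc 1 (n-1), (M k - M (k+1)) * g k := by
  intro n hn
  induction n, hn using Nat.le_induction with
  | base => simp; ring
  | succ n hn ih =>
    rw [Finset.sum_Icc_succ_top (by omega : 1 ≤ n + 1), ih]
    have h1 : n + 1 - 1 = n := by omega
    rw [h1]
    rw [show n = (n - 1) + 1 by omega] at *
    rw [Finset.sum_Icc_succ_top (by omega : 1 ≤ n - 1 + 1)]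
    simp only [Nat.add_sub_cancel]
    ring

theorem stmt0 (I : ℕ) (hI : 2 ≤ I) (θ κ a : ℝ) (hθ : 0 < θ) (hκ : 0 < κ) (ha : 0 < a)
    (vlow vhigh : ℝ) (hv : vlow < vhigh) (hvl : 0 ≤ vlow)
    (M : ℕ → ℝ) (hM : ∀ k ∈ Finset.Icc 1 (I - 1), M (k + 1) ≤ M k) (hMI : 0 ≤ M I)
    (f : ℕ → ℝ → ℝ) (hf0 : ∀ t, f 0 t = 0) (hfI : ∀ t, f I t = 0)
    (hfc : ∀ k ∈ Finset.Icc 1 (I - 1), ContinuousOn (f k) (Set.Icc vlow vhigh))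
    (hfnn : ∀ k ∈ Finset.Icc 1 (I - 1), ∀ t ∈ Set.Icc vlow vhigh, 0 ≤ f k t)
    (c β : ℝ → ℝ)
    (hc : ∀ z, c z = θ * κ * a * z ^ 2)
    (hβ : ∀ v, β v = Real.sqrt ((1 / (θ * κ * a)) *
      ∑ k ∈ Finset.Icc 1 (I - 1), (M k - M (k + 1)) * ∫ t in vlow..v, t * f k t)) :
    (∀ v ∈ Set.Icc vlow vhigh,
        c (β v) = ∑ k ∈ Finset.Icc 1 (I - 1), (M k - M (k + 1)) * ∫ t in vlow..v, t * f k t)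
    ∧ β vlow = 0
    ∧ (∀ v ∈ Set.Ioo vlow vhigh,
        HasDerivAt (fun w => c (β w))
          (v * ∑ k ∈ Finset.Icc 1 I, (f k v - f (k - 1) v) * M k) v) := by
  have hC : 0 < θ * κ * a := by positivity
  -- continuity of integrand
  have hgc : ∀ k ∈ Finset.Icc 1 (I - 1),
      ContinuousOn (fun t => t * f k t) (Set.Icc vlow vhigh) :=
    fun k hk => continuousOn_id.mul (hfc k hk)
  -- part 1
  have part1 : ∀ v ∈ Set.Icc vlow vhigh,
      c (β v) = ∑ k ∈ Finset.Icc 1 (I - 1), (M k - M (k + 1)) * ∫ t in vlow..v, t * f k t := by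
    intro v hvmem
    obtain ⟨hv1, hv2⟩ := hvmem
    have hS : 0 ≤ ∑ k ∈ Finset.Icc 1 (I - 1), (M k - M (k + 1)) * ∫ t in vlow..v, t * f k t := by
      apply Finset.sum_nonneg
      intro k hk
      apply mul_nonneg (sub_nonneg.mpr (hM k hk))
      apply intervalIntegral.integral_nonneg hv1
      intro u hu
      have hu' : u ∈ Set.Icc vlow vhigh := ⟨hu.1, le_trans hu.2 hv2⟩
      exact mul_nonneg (le_trans hvl hu.1) (hfnn k hk u hu')
    rw [hc, hβ, Real.sq_sqrt (by positivity)]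
    field_simp
  refine ⟨part1, ?_, ?_⟩
  · rw [hβ]
    simp [intervalIntegral.integral_same]
  · intro v hvmem
    obtain ⟨hv1, hv2⟩ := hvmem
    -- derivative of each integral
    have hD : HasDerivAt
        (fun w => ∑ k ∈ Finset.Icc 1 (I - 1), (M k - M (k + 1)) * ∫ t in vlow..w, t * f k t)
        (∑ k ∈ Finset.Icc 1 (I - 1), (M k - M (k + 1)) * (v * f k v)) v := by
      apply HasDerivAt.fun_sum
      intro k hk
      apply HasDerivAt.const_mul
      apply intervalIntegral.integral_hasDerivAt_right
      · apply (hgc k hk).mono _ |>.intervalIntegrable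
        rw [Set.uIcc_of_le hv1.le]
        exact Set.Icc_subset_Icc le_rfl hv2.le
      · exact ((hgc k hk).mono Set.Ioo_subset_Icc_self).stronglyMeasurableAtFilter
          isOpen_Ioo v ⟨hv1, hv2⟩
      · exact (hgc k hk).continuousAt (Icc_mem_nhds hv1 hv2)
    -- identify derivative with RHS
    have habel := abel_sum (fun k => f k v) M I (by omega)
    simp only [hf0, hfI, zero_mul, sub_zero, zero_add] at habel
    have heq : ∑ k ∈ Finset.Icc 1 (I - 1), (M k - M (k + 1)) * (v * f k v)
        = v * ∑ k ∈ Finset.Icc 1 I, (f k v - f (k - 1) v) * M k := by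
      rw [habel, Finset.mul_sum]
      exact Finset.sum_congr rfl (fun k _ => by ring)
    rw [heq] at hD
    apply hD.congr_of_eventuallyEq
    filter_upwards [Filter.eventually_mem_set.mpr (Ioo_mem_nhds hv1 hv2)] with w hw
    exact part1 w (Set.Ioo_subset_Icc_self hw)
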